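/- Let X = ℓ¹ and f_n(x) = |x_n|^{1+1/n}. For the sequence h_n = n^{-1} e_n one has ‖h_n‖ = 1/n → 0 and (I_f(h_n) − I_f(0))/‖h_n‖ = n^{-1/n} → 1, where I_f(x) = Σ_k |x_k|^{1+1/k}. -/

import Mathlib

open Filter Topology
noncomputable section

/-- The Banach space `ℓ¹` of absolutely summable real sequences. -/
abbrev ellOne : Type := lp (fun _ : ℕ => ℝ) 1

/-- The canonical basis vector `e_n` of `ℓ¹` (here indexed from `0`, so `e n` plays the role
of the paper's `e_{n+1}`). -/
def e (n : ℕ) : ellOne := lp.single 1 n (1 : ℝ)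

/-- The integrand `f_n(x) = |x_n|^{1+1/n}` (with index shift: exponent `1 + 1/(n+1)`). -/
def fn (n : ℕ) (x : ellOne) : ℝ := |x n| ^ ((1 : ℝ) + 1 / (n + 1))

/-- `I_f(x) = Σ_k |x_k|^{1+1/k}`. -/
def If (x : ellOne) : ℝ := ∑' n : ℕ, fn n x

/-- The test vector `h_n = n⁻¹ e_n` (with the index shift `n ↦ n+1`). -/
def h (n : ℕ) : ellOne := ((n : ℝ) + 1)⁻¹ • e n


lemma cpos (n : ℕ) : (0:ℝ) < (n:ℝ) + 1 := by positivity

lemma expos (n : ℕ) : (0:ℝ) < (1 : ℝ) + 1 / ((n:ℝ) + 1) := by positivity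

lemma norm_e (n : ℕ) : ‖e n‖ = 1 := by
  have := lp.norm_single (p := 1) (E := fun _ : ℕ => ℝ) (by norm_num) n (1:ℝ)
  simpa [e] using this

lemma norm_h (n : ℕ) : ‖h n‖ = 1 / ((n : ℝ) + 1) := by
  rw [h, norm_smul, norm_e, norm_inv, Real.norm_eq_abs, abs_of_pos (cpos n)]
  ring

lemma h_apply (n k : ℕ) : (h n : ℕ → ℝ) k = if k = n then ((n:ℝ)+1)⁻¹ else 0 := by
  have : (h n : ℕ → ℝ) k = ((n:ℝ)+1)⁻¹ * (e n : ℕ → ℝ) k := rfl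
  rw [this, e]
  by_cases hk : k = n
  · subst hk; rw [lp.single_apply_self]; simp
  · rw [lp.single_apply_ne _ _ _ hk]; simp [hk]

lemma If_zero : If 0 = 0 := by
  have : ∀ n, fn n 0 = 0 := by
    intro n
    have : ((0 : ellOne) : ℕ → ℝ) n = 0 := rfl
    rw [fn, this, abs_zero, Real.zero_rpow (expos n).ne']
  simp [If, this]

lemma If_h (n : ℕ) : If (h n) = (((n:ℝ)+1)⁻¹) ^ ((1 : ℝ) + 1 / ((n:ℝ) + 1)) := by
  rw [If]
  rw [tsum_eq_single n]
  · simp [fn, h_apply, abs_of_pos (inv_pos.mpr (cpos n))]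
  · intro k hk
    rw [fn, h_apply, if_neg hk, abs_zero, Real.zero_rpow (expos k).ne']

/-- For `h_n = n⁻¹ e_n` one has `‖h_n‖ = 1/n → 0` while the difference quotient
`(I_f(h_n) − I_f(0))/‖h_n‖ = n^{-1/n} → 1`, so `I_f` fails to be Fréchet differentiable
at `0` with derivative `0`. -/
theorem diff_quotient_tendsto_one :
    (∀ n : ℕ, ‖h n‖ = 1 / ((n : ℝ) + 1)) ∧
    Tendsto (fun n : ℕ => ‖h n‖) atTop (𝓝 0) ∧
    (∀ n : ℕ, (If (h n) - If 0) / ‖h n‖ = ((n : ℝ) + 1) ^ (-(1 / ((n : ℝ) + 1)))) ∧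
    Tendsto (fun n : ℕ => ((n : ℝ) + 1) ^ (-(1 / ((n : ℝ) + 1)))) atTop (𝓝 1) := by
  refine ⟨norm_h, ?_, ?_, ?_⟩
  · simpa [norm_h] using tendsto_one_div_add_atTop_nhds_zero_nat (𝕜 := ℝ)
  · intro n
    set c : ℝ := (n:ℝ) + 1 with hc
    have hc0 : 0 < c := cpos n
    rw [If_h, If_zero, norm_h, sub_zero]
    rw [Real.inv_rpow hc0.le, ← Real.rpow_neg hc0.le, div_div_eq_mul_div, div_one,
      ← Real.rpow_add_one hc0.ne', show -(1 + 1 / c) + 1 = -(1 / c) by ring]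
  · have := tendsto_rpow_neg_div.comp (tendsto_atTop_add_const_right atTop 1 tendsto_natCast_atTop_atTop)
    refine this.congr fun n => ?_
    simp [neg_div]
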